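/- Let f : ℝ → ℝ → ℝ be measurable, let S be a Borel set of full μ_n-measure, and suppose there are constants A, B ≥ 0 such that (f(a₁,a₂) − f(a₃,a₄))² ≤ A(a₁−a₃)² + B(a₂−a₄)² for all a₁, a₂, a₃, a₄ ∈ S. Assume μ_n has finite second moment. Then ∫∫ (x−y)² dμ_{n+1}(x) dμ_{n+1}(y) ≤ (2 + A + B) · ∫∫ (x−y)² dμ_n(x) dμ_n(y); equivalently, if X and X' are independent with law μ_{n+1} and Y, Y' are independent with law μ_n, then E[(X−X')²] ≤ (2+A+B)·E[(Y−Y')²]. -/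

import Mathlib

open MeasureTheory Filter

/-- The recursively defined sequence of measures: `μ₀ = (δ₁ + δ₂)/2` and `μ_{n+1}` is the
pushforward of `μ_n ⊗ μ_n ⊗ μ_n ⊗ μ_n` under `(a,b,c,d) ↦ a + b + f c d`. -/
noncomputable def mu (f : ℝ → ℝ → ℝ) : ℕ → Measure ℝ
  | 0 => (2 : ENNReal)⁻¹ • Measure.dirac 1 + (2 : ENNReal)⁻¹ • Measure.dirac 2
  | n + 1 =>
      Measure.map (fun p : ℝ × ℝ × ℝ × ℝ => p.1 + p.2.1 + f p.2.2.1 p.2.2.2)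
        ((mu f n).prod ((mu f n).prod ((mu f n).prod (mu f n))))

namespace Stmt8Aux

lemma msq : Measurable (fun x : ℝ => x ^ 2) := (continuous_pow 2).measurable

lemma masm (κ : Measure ℝ) : AEStronglyMeasurable (fun x : ℝ => x ^ 2) κ :=
  msq.aestronglyMeasurable

lemma midasm (κ : Measure ℝ) : AEStronglyMeasurable (fun x : ℝ => x) κ :=
  measurable_id.aestronglyMeasurable

lemma muProb (f : ℝ → ℝ → ℝ) (hf : Measurable (fun p : ℝ × ℝ => f p.1 p.2)) :
    ∀ n, IsProbabilityMeasure (mu f n) := by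
  intro n
  induction n with
  | zero =>
      constructor
      simp [mu]
      rw [← two_mul, ENNReal.mul_inv_cancel (by norm_num) (by norm_num)]
  | succ n ih =>
      haveI := ih
      have hg : Measurable (fun p : ℝ × ℝ × ℝ × ℝ => p.1 + p.2.1 + f p.2.2.1 p.2.2.2) := by
        apply Measurable.add
        · exact measurable_fst.add (measurable_fst.comp measurable_snd)
        · exact hf.comp (measurable_snd.snd.fst.prodMk measurable_snd.snd.snd)
      show IsProbabilityMeasure (Measure.map _ _)
      exact Measure.isProbabilityMeasure_map hg.aemeasurable

lemma int_id {κ : Measure ℝ} [IsProbabilityMeasure κ]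
    (hs : Integrable (fun x : ℝ => x ^ 2) κ) :
    Integrable (fun x : ℝ => x) κ := by
  refine (hs.add (integrable_const 1)).mono' measurable_id.aestronglyMeasurable ?_
  filter_upwards with x
  have h1 : |x| ≤ x ^ 2 + 1 := by nlinarith [sq_abs x, sq_nonneg (|x| - 1), abs_nonneg x]
  simpa [Real.norm_eq_abs] using h1

lemma int_comp_fst {α β : Type*} [MeasurableSpace α] [MeasurableSpace β]
    {μ : Measure α} {ν : Measure β} [SFinite μ] [SFinite ν] [IsProbabilityMeasure ν]
    {g : α → ℝ} (hg : Integrable g μ) :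
    Integrable (fun p : α × β => g p.1) (μ.prod ν) := by
  have hmap : Measure.map Prod.fst (μ.prod ν) = μ := by simp
  have h1 : Integrable g (Measure.map Prod.fst (μ.prod ν)) := by rw [hmap]; exact hg
  exact (integrable_map_measure h1.aestronglyMeasurable
    measurable_fst.aemeasurable).mp h1

lemma int_comp_snd {α β : Type*} [MeasurableSpace α] [MeasurableSpace β]
    {μ : Measure α} {ν : Measure β} [SFinite μ] [SFinite ν] [IsProbabilityMeasure μ]
    {g : β → ℝ} (hg : Integrable g ν) :
    Integrable (fun p : α × β => g p.2) (μ.prod ν) := by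
  have hmap : Measure.map Prod.snd (μ.prod ν) = ν := by simp
  have h1 : Integrable g (Measure.map Prod.snd (μ.prod ν)) := by rw [hmap]; exact hg
  exact (integrable_map_measure h1.aestronglyMeasurable
    measurable_snd.aemeasurable).mp h1

lemma integral_comp_fst {α β : Type*} [MeasurableSpace α] [MeasurableSpace β]
    {μ : Measure α} {ν : Measure β} [SFinite μ] [SFinite ν] [IsProbabilityMeasure ν]
    {g : α → ℝ} (hg : AEStronglyMeasurable g μ) :
    ∫ p : α × β, g p.1 ∂(μ.prod ν) = ∫ x, g x ∂μ := by
  have hmap : Measure.map Prod.fst (μ.prod ν) = μ := by simp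
  have hg' : AEStronglyMeasurable g (Measure.map Prod.fst (μ.prod ν)) := by
    rw [hmap]; exact hg
  conv_rhs => rw [← hmap]
  rw [integral_map measurable_fst.aemeasurable hg']

lemma integral_comp_snd {α β : Type*} [MeasurableSpace α] [MeasurableSpace β]
    {μ : Measure α} {ν : Measure β} [SFinite μ] [SFinite ν] [IsProbabilityMeasure μ]
    {g : β → ℝ} (hg : AEStronglyMeasurable g ν) :
    ∫ p : α × β, g p.2 ∂(μ.prod ν) = ∫ x, g x ∂ν := by
  have hmap : Measure.map Prod.snd (μ.prod ν) = ν := by simp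
  have hg' : AEStronglyMeasurable g (Measure.map Prod.snd (μ.prod ν)) := by
    rw [hmap]; exact hg
  conv_rhs => rw [← hmap]
  rw [integral_map measurable_snd.aemeasurable hg']

/-- The quantity `D κ = ∫∫ (x - y)^2`. -/
noncomputable def D (κ : Measure ℝ) : ℝ := ∫ p : ℝ × ℝ, (p.1 - p.2) ^ 2 ∂(κ.prod κ)

lemma Dint {κ : Measure ℝ} [IsProbabilityMeasure κ]
    (hs : Integrable (fun x : ℝ => x ^ 2) κ) :
    Integrable (fun p : ℝ × ℝ => (p.1 - p.2) ^ 2) (κ.prod κ) := by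
  have hb : Integrable (fun p : ℝ × ℝ => 2 * p.1 ^ 2 + 2 * p.2 ^ 2) (κ.prod κ) :=
    ((int_comp_fst hs).const_mul 2).add ((int_comp_snd hs).const_mul 2)
  refine hb.mono' ((measurable_fst.sub measurable_snd).pow_const 2).aestronglyMeasurable ?_
  filter_upwards with p
  have : (p.1 - p.2) ^ 2 ≤ 2 * p.1 ^ 2 + 2 * p.2 ^ 2 := by nlinarith [sq_nonneg (p.1 + p.2)]
  simpa [Real.norm_eq_abs, abs_of_nonneg (sq_nonneg (p.1 - p.2))] using this

lemma Dform (κ : Measure ℝ) [IsProbabilityMeasure κ]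
    (hs : Integrable (fun x : ℝ => x ^ 2) κ) :
    D κ = 2 * (∫ x, x ^ 2 ∂κ) - 2 * (∫ x, x ∂κ) ^ 2 := by
  have hid := int_id hs
  have h1 : Integrable (fun p : ℝ × ℝ => p.1 ^ 2) (κ.prod κ) := int_comp_fst hs
  have h2 : Integrable (fun p : ℝ × ℝ => p.2 ^ 2) (κ.prod κ) := int_comp_snd hs
  have h3 : Integrable (fun p : ℝ × ℝ => p.1 * p.2) (κ.prod κ) := hid.mul_prod hid
  have key : (fun p : ℝ × ℝ => (p.1 - p.2) ^ 2) =
      fun p : ℝ × ℝ => p.1 ^ 2 + p.2 ^ 2 + (-2) * (p.1 * p.2) := by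
    funext p; ring
  have h12 : Integrable (fun p : ℝ × ℝ => p.1 ^ 2 + p.2 ^ 2) (κ.prod κ) := h1.add h2
  rw [D, key, integral_add h12 (h3.const_mul (-2)), integral_add h1 h2,
    integral_const_mul _,
    show ∫ a : ℝ × ℝ, a.1 * a.2 ∂(κ.prod κ) = (∫ x, x ∂κ) * ∫ x, x ∂κ from
      integral_prod_mul (fun x : ℝ => x) (fun x : ℝ => x),
    integral_comp_fst (masm κ), integral_comp_snd (masm κ)]
  ring

lemma sum_int_sq (κ₁ κ₂ : Measure ℝ) [IsProbabilityMeasure κ₁] [IsProbabilityMeasure κ₂]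
    (h1 : Integrable (fun x : ℝ => x ^ 2) κ₁) (h2 : Integrable (fun x : ℝ => x ^ 2) κ₂) :
    Integrable (fun x : ℝ => x ^ 2)
      (Measure.map (fun q : ℝ × ℝ => q.1 + q.2) (κ₁.prod κ₂)) := by
  have hT : Measurable (fun q : ℝ × ℝ => q.1 + q.2) := measurable_fst.add measurable_snd
  rw [integrable_map_measure (masm _) hT.aemeasurable]
  have hb : Integrable (fun p : ℝ × ℝ => 2 * p.1 ^ 2 + 2 * p.2 ^ 2) (κ₁.prod κ₂) :=
    ((int_comp_fst h1).const_mul 2).add ((int_comp_snd h2).const_mul 2)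
  refine hb.mono' ((measurable_fst.add measurable_snd).pow_const 2).aestronglyMeasurable ?_
  filter_upwards with p
  have : (p.1 + p.2) ^ 2 ≤ 2 * p.1 ^ 2 + 2 * p.2 ^ 2 := by nlinarith [sq_nonneg (p.1 - p.2)]
  simpa [Real.norm_eq_abs, abs_of_nonneg (sq_nonneg (p.1 + p.2))] using this

lemma D_sum (κ₁ κ₂ : Measure ℝ) [IsProbabilityMeasure κ₁] [IsProbabilityMeasure κ₂]
    (h1 : Integrable (fun x : ℝ => x ^ 2) κ₁) (h2 : Integrable (fun x : ℝ => x ^ 2) κ₂) :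
    D (Measure.map (fun q : ℝ × ℝ => q.1 + q.2) (κ₁.prod κ₂)) = D κ₁ + D κ₂ := by
  have hT : Measurable (fun q : ℝ × ℝ => q.1 + q.2) := measurable_fst.add measurable_snd
  set ν := Measure.map (fun q : ℝ × ℝ => q.1 + q.2) (κ₁.prod κ₂) with hν
  haveI : IsProbabilityMeasure ν := Measure.isProbabilityMeasure_map hT.aemeasurable
  have hsν : Integrable (fun x : ℝ => x ^ 2) ν := sum_int_sq κ₁ κ₂ h1 h2
  have hid1 := int_id h1
  have hid2 := int_id h2
  -- second moment of ν
  have hmν : ∫ x, x ∂ν = (∫ x, x ∂κ₁) + ∫ x, x ∂κ₂ := by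
    rw [hν, integral_map hT.aemeasurable (midasm _)]
    rw [integral_add (int_comp_fst hid1) (int_comp_snd hid2),
      integral_comp_fst (midasm _), integral_comp_snd (midasm _)]
  have hsν' : ∫ x, x ^ 2 ∂ν =
      (∫ x, x ^ 2 ∂κ₁) + (∫ x, x ^ 2 ∂κ₂) + 2 * ((∫ x, x ∂κ₁) * ∫ x, x ∂κ₂) := by
    rw [hν, integral_map hT.aemeasurable (masm _)]
    have key : (fun q : ℝ × ℝ => (q.1 + q.2) ^ 2) =
        fun q : ℝ × ℝ => q.1 ^ 2 + q.2 ^ 2 + 2 * (q.1 * q.2) := by funext q; ring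
    have h12 : Integrable (fun q : ℝ × ℝ => q.1 ^ 2 + q.2 ^ 2) (κ₁.prod κ₂) :=
      (int_comp_fst h1).add (int_comp_snd h2)
    rw [key, integral_add h12 ((hid1.mul_prod hid2).const_mul 2),
      integral_add (int_comp_fst h1) (int_comp_snd h2),
      integral_const_mul _,
      show ∫ a : ℝ × ℝ, a.1 * a.2 ∂(κ₁.prod κ₂) = (∫ x, x ∂κ₁) * ∫ x, x ∂κ₂ from
        integral_prod_mul (fun x : ℝ => x) (fun x : ℝ => x),
      integral_comp_fst (masm κ₁), integral_comp_snd (masm κ₂)]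
  rw [Dform ν hsν, Dform κ₁ h1, Dform κ₂ h2, hmν, hsν']
  ring

end Stmt8Aux

open Stmt8Aux

theorem stmt8 (f : ℝ → ℝ → ℝ) (n : ℕ) (A B : ℝ) (S : Set ℝ)
    (hf : Measurable (fun p : ℝ × ℝ => f p.1 p.2))
    (hS : MeasurableSet S)
    (hfull : mu f n Sᶜ = 0)
    (hA : 0 ≤ A) (hB : 0 ≤ B)
    (h : ∀ a1 ∈ S, ∀ a2 ∈ S, ∀ a3 ∈ S, ∀ a4 ∈ S,
      (f a1 a2 - f a3 a4) ^ 2 ≤ A * (a1 - a3) ^ 2 + B * (a2 - a4) ^ 2)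
    (hmom : Integrable (fun x : ℝ => x ^ 2) (mu f n)) :
    ∫ p : ℝ × ℝ, (p.1 - p.2) ^ 2 ∂((mu f (n + 1)).prod (mu f (n + 1))) ≤
      (2 + A + B) * ∫ p : ℝ × ℝ, (p.1 - p.2) ^ 2 ∂((mu f n).prod (mu f n)) := by
  haveI hμP : IsProbabilityMeasure (mu f n) := muProb f hf n
  set μ := mu f n with hμdef
  set F' : ℝ × ℝ → ℝ := fun q => f q.1 q.2 with hF'def
  have hF' : Measurable F' := hf
  set νF : Measure ℝ := Measure.map F' (μ.prod μ) with hνFdef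
  haveI : IsProbabilityMeasure νF := Measure.isProbabilityMeasure_map hF'.aemeasurable
  set T : ℝ × ℝ → ℝ := fun q => q.1 + q.2 with hTdef
  have hT : Measurable T := measurable_fst.add measurable_snd
  set G : ℝ × ℝ × ℝ → ℝ := fun r => r.1 + f r.2.1 r.2.2 with hGdef
  have hG : Measurable G := measurable_fst.add (hf.comp measurable_snd)
  set κ : Measure ℝ := Measure.map T (μ.prod νF) with hκdef
  -- S is nonempty
  obtain ⟨c₀, hc₀⟩ : S.Nonempty := by
    by_contra hne
    rw [Set.not_nonempty_iff_eq_empty] at hne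
    rw [hne, Set.compl_empty] at hfull
    exact (IsProbabilityMeasure.ne_zero μ) (Measure.measure_univ_eq_zero.mp hfull)
  -- a.e. membership in S × S for μ.prod μ
  have hfullprod : (μ.prod μ) ((S ×ˢ S)ᶜ) = 0 := by
    have hsub : (S ×ˢ S)ᶜ ⊆ (Sᶜ ×ˢ Set.univ) ∪ (Set.univ ×ˢ Sᶜ) := by
      intro p hp
      by_cases h1 : p.1 ∈ S
      · right; exact ⟨Set.mem_univ _, fun h2 => hp ⟨h1, h2⟩⟩
      · left; exact ⟨h1, Set.mem_univ _⟩
    refine measure_mono_null hsub (le_antisymm (le_trans (measure_union_le _ _) ?_)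
      (zero_le))
    rw [Measure.prod_prod, Measure.prod_prod, hfull]
    simp
  have haeS : ∀ᵐ q ∂(μ.prod μ), q.1 ∈ S ∧ q.2 ∈ S := by
    rw [ae_iff]
    refine measure_mono_null ?_ hfullprod
    intro q hq
    simp only [Set.mem_setOf_eq] at hq
    intro hq'
    exact hq ⟨hq'.1, hq'.2⟩
  -- integrability of (x - c)^2
  have hsqsub : ∀ c : ℝ, Integrable (fun x : ℝ => (x - c) ^ 2) μ := by
    intro c
    have : Integrable (fun x : ℝ => x ^ 2 - 2 * c * x + c ^ 2) μ :=
      (hmom.sub ((int_id hmom).const_mul (2 * c))).add (integrable_const _)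
    refine this.congr (Filter.Eventually.of_forall fun x => ?_)
    ring
  -- F'^2 is integrable on μ.prod μ
  have hF2 : Integrable (fun q : ℝ × ℝ => (F' q) ^ 2) (μ.prod μ) := by
    have hb : Integrable (fun q : ℝ × ℝ =>
        2 * (A * (q.1 - c₀) ^ 2) + 2 * (B * (q.2 - c₀) ^ 2) + 2 * (f c₀ c₀) ^ 2)
        (μ.prod μ) := by
      refine Integrable.add (Integrable.add ?_ ?_) (integrable_const _)
      · exact ((int_comp_fst (hsqsub c₀)).const_mul A).const_mul 2
      · exact ((int_comp_snd (hsqsub c₀)).const_mul B).const_mul 2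
    refine hb.mono' (hF'.pow_const 2).aestronglyMeasurable ?_
    filter_upwards [haeS] with q hq
    have hbd := h q.1 hq.1 q.2 hq.2 c₀ hc₀ c₀ hc₀
    have h2 : (F' q) ^ 2 ≤ 2 * (A * (q.1 - c₀) ^ 2) + 2 * (B * (q.2 - c₀) ^ 2) +
        2 * (f c₀ c₀) ^ 2 := by
      have h3 := sq_nonneg (f q.1 q.2 - 2 * f c₀ c₀)
      show (f q.1 q.2) ^ 2 ≤ _
      nlinarith [hbd]
    simpa [Real.norm_eq_abs, abs_of_nonneg (sq_nonneg (F' q))] using h2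
  have hsνF : Integrable (fun x : ℝ => x ^ 2) νF := by
    rw [hνFdef, integrable_map_measure (masm _) hF'.aemeasurable]
    exact hF2
  -- structural identity : mu f (n+1) = T_* (μ × κ)
  have step1 : μ.prod νF = Measure.map (Prod.map id F') (μ.prod (μ.prod μ)) := by
    rw [← Measure.map_prod_map _ _ measurable_id hF', Measure.map_id]
  have hκeq : κ = Measure.map G (μ.prod (μ.prod μ)) := by
    rw [hκdef, step1, Measure.map_map hT (measurable_id.prodMap hF')]
    rfl
  have step2 : μ.prod κ = Measure.map (Prod.map id G)
      (μ.prod (μ.prod (μ.prod μ))) := by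
    rw [hκeq, ← Measure.map_prod_map _ _ measurable_id hG, Measure.map_id]
  have hν : mu f (n + 1) = Measure.map T (μ.prod κ) := by
    rw [step2, Measure.map_map hT (measurable_id.prodMap hG)]
    show Measure.map (fun p : ℝ × ℝ × ℝ × ℝ => p.1 + p.2.1 + f p.2.2.1 p.2.2.2) _ = _
    congr 1
    funext p
    show p.1 + p.2.1 + f p.2.2.1 p.2.2.2 = p.1 + (p.2.1 + f p.2.2.1 p.2.2.2)
    ring
  haveI : IsProbabilityMeasure κ := Measure.isProbabilityMeasure_map hT.aemeasurable
  have hsκ : Integrable (fun x : ℝ => x ^ 2) κ := sum_int_sq μ νF hmom hsνF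
  -- decomposition of D
  have hDν : D (mu f (n + 1)) = D μ + (D μ + D νF) := by
    rw [hν, hκdef]
    rw [show Measure.map T = Measure.map (fun q : ℝ × ℝ => q.1 + q.2) from rfl]
    rw [D_sum μ κ hmom hsκ, hκdef,
      show Measure.map T = Measure.map (fun q : ℝ × ℝ => q.1 + q.2) from rfl,
      D_sum μ νF hmom hsνF]
  -- bound on D νF
  have hDμint : Integrable (fun p : ℝ × ℝ => (p.1 - p.2) ^ 2) (μ.prod μ) := Dint hmom
  have hDνF : D νF ≤ A * D μ + B * D μ := by
    have hprodmap : νF.prod νF =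
        Measure.map (Prod.map F' F') ((μ.prod μ).prod (μ.prod μ)) :=
      Measure.map_prod_map _ _ hF' hF'
    have hDνFeq : D νF = ∫ r : (ℝ × ℝ) × (ℝ × ℝ), (F' r.1 - F' r.2) ^ 2
        ∂((μ.prod μ).prod (μ.prod μ)) := by
      rw [D, hprodmap, integral_map (hF'.prodMap hF').aemeasurable
        (f := fun p : ℝ × ℝ => (p.1 - p.2) ^ 2) ((measurable_fst.sub measurable_snd).pow_const 2).aestronglyMeasurable]
      rfl
    -- the projection maps
    have hP1 : Measurable (fun r : (ℝ × ℝ) × (ℝ × ℝ) => (r.1.1, r.2.1)) :=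
      (measurable_fst.fst).prodMk (measurable_snd.fst)
    have hP2 : Measurable (fun r : (ℝ × ℝ) × (ℝ × ℝ) => (r.1.2, r.2.2)) :=
      (measurable_fst.snd).prodMk (measurable_snd.snd)
    have hmapP1 : Measure.map (fun r : (ℝ × ℝ) × (ℝ × ℝ) => (r.1.1, r.2.1))
        ((μ.prod μ).prod (μ.prod μ)) = μ.prod μ := by
      have : (fun r : (ℝ × ℝ) × (ℝ × ℝ) => (r.1.1, r.2.1)) =
          Prod.map (Prod.fst : ℝ × ℝ → ℝ) (Prod.fst : ℝ × ℝ → ℝ) := rfl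
      rw [this, ← Measure.map_prod_map _ _ measurable_fst measurable_fst]
      simp
    have hmapP2 : Measure.map (fun r : (ℝ × ℝ) × (ℝ × ℝ) => (r.1.2, r.2.2))
        ((μ.prod μ).prod (μ.prod μ)) = μ.prod μ := by
      have : (fun r : (ℝ × ℝ) × (ℝ × ℝ) => (r.1.2, r.2.2)) =
          Prod.map (Prod.snd : ℝ × ℝ → ℝ) (Prod.snd : ℝ × ℝ → ℝ) := rfl
      rw [this, ← Measure.map_prod_map _ _ measurable_snd measurable_snd]
      simp
    have hint1 : Integrable (fun r : (ℝ × ℝ) × (ℝ × ℝ) => (r.1.1 - r.2.1) ^ 2)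
        ((μ.prod μ).prod (μ.prod μ)) := by
      have h1' : Integrable (fun p : ℝ × ℝ => (p.1 - p.2) ^ 2)
          (Measure.map (fun r : (ℝ × ℝ) × (ℝ × ℝ) => (r.1.1, r.2.1))
            ((μ.prod μ).prod (μ.prod μ))) := by rw [hmapP1]; exact hDμint
      exact (integrable_map_measure h1'.aestronglyMeasurable hP1.aemeasurable).mp h1'
    have hint2 : Integrable (fun r : (ℝ × ℝ) × (ℝ × ℝ) => (r.1.2 - r.2.2) ^ 2)
        ((μ.prod μ).prod (μ.prod μ)) := by
      have h2' : Integrable (fun p : ℝ × ℝ => (p.1 - p.2) ^ 2)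
          (Measure.map (fun r : (ℝ × ℝ) × (ℝ × ℝ) => (r.1.2, r.2.2))
            ((μ.prod μ).prod (μ.prod μ))) := by rw [hmapP2]; exact hDμint
      exact (integrable_map_measure h2'.aestronglyMeasurable hP2.aemeasurable).mp h2'
    have hintval1 : ∫ r : (ℝ × ℝ) × (ℝ × ℝ), (r.1.1 - r.2.1) ^ 2
        ∂((μ.prod μ).prod (μ.prod μ)) = D μ := by
      rw [D]
      conv_rhs => rw [← hmapP1]
      rw [integral_map hP1.aemeasurable
        (f := fun p : ℝ × ℝ => (p.1 - p.2) ^ 2) ((measurable_fst.sub measurable_snd).pow_const 2).aestronglyMeasurable]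
    have hintval2 : ∫ r : (ℝ × ℝ) × (ℝ × ℝ), (r.1.2 - r.2.2) ^ 2
        ∂((μ.prod μ).prod (μ.prod μ)) = D μ := by
      rw [D]
      conv_rhs => rw [← hmapP2]
      rw [integral_map hP2.aemeasurable
        (f := fun p : ℝ × ℝ => (p.1 - p.2) ^ 2) ((measurable_fst.sub measurable_snd).pow_const 2).aestronglyMeasurable]
    -- a.e. membership for the quadruple product
    have hfullquad : ((μ.prod μ).prod (μ.prod μ)) (((S ×ˢ S) ×ˢ (S ×ˢ S))ᶜ) = 0 := by
      have hsub : ((S ×ˢ S) ×ˢ (S ×ˢ S))ᶜ ⊆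
          ((S ×ˢ S)ᶜ ×ˢ Set.univ) ∪ (Set.univ ×ˢ (S ×ˢ S)ᶜ) := by
        intro p hp
        by_cases h1 : p.1 ∈ S ×ˢ S
        · right; exact ⟨Set.mem_univ _, fun h2 => hp ⟨h1, h2⟩⟩
        · left; exact ⟨h1, Set.mem_univ _⟩
      refine measure_mono_null hsub (le_antisymm (le_trans (measure_union_le _ _) ?_)
        (zero_le))
      rw [Measure.prod_prod, Measure.prod_prod, hfullprod]
      simp
    have haeQ : ∀ᵐ r ∂((μ.prod μ).prod (μ.prod μ)),
        (r.1.1 ∈ S ∧ r.1.2 ∈ S) ∧ (r.2.1 ∈ S ∧ r.2.2 ∈ S) := by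
      rw [ae_iff]
      refine measure_mono_null ?_ hfullquad
      intro r hr
      simp only [Set.mem_setOf_eq] at hr
      intro hr'
      exact hr ⟨⟨hr'.1.1, hr'.1.2⟩, ⟨hr'.2.1, hr'.2.2⟩⟩
    rw [hDνFeq]
    calc ∫ r : (ℝ × ℝ) × (ℝ × ℝ), (F' r.1 - F' r.2) ^ 2 ∂((μ.prod μ).prod (μ.prod μ))
        ≤ ∫ r : (ℝ × ℝ) × (ℝ × ℝ),
            (A * (r.1.1 - r.2.1) ^ 2 + B * (r.1.2 - r.2.2) ^ 2)
            ∂((μ.prod μ).prod (μ.prod μ)) := by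
          refine integral_mono_of_nonneg
            (Filter.Eventually.of_forall fun r => sq_nonneg _)
            ((hint1.const_mul A).add (hint2.const_mul B)) ?_
          filter_upwards [haeQ] with r hr
          exact h r.1.1 hr.1.1 r.1.2 hr.1.2 r.2.1 hr.2.1 r.2.2 hr.2.2
      _ = A * D μ + B * D μ := by
          rw [integral_add (hint1.const_mul A) (hint2.const_mul B),
            integral_const_mul _, integral_const_mul _, hintval1, hintval2]
  -- conclusion
  have hDμnonneg : 0 ≤ D μ :=
    integral_nonneg fun p => sq_nonneg _
  show D (mu f (n + 1)) ≤ (2 + A + B) * D μ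
  rw [hDν]
  nlinarith [hDνF]
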